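/- Proposition (incidence, even case): let n ≥ 2 be even and let z = σ ∘ p 0 1 (apply the contextual inversion p 0 1 first, then the cyclic shift σ), viewed as a permutation of Fin n → ZMod 12. Then z^n = id. -/

import Mathlib

/-- Contextual inversion `p i j` on pitch-class segments of length `n`. -/
def p {n : ℕ} (i j : Fin n) (x : Fin n → ZMod 12) : Fin n → ZMod 12 :=
  fun r => x i + x j - x r

/-- Contextual inversion `p i j` as a permutation (it is an involution). -/
def pEquiv {n : ℕ} (i j : Fin n) : Equiv.Perm (Fin n → ZMod 12) where
  toFun := p i j
  invFun := p i j
  left_inv x := by funext r; simp only [p]; ring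
  right_inv x := by funext r; simp only [p]; ring

/-- The cyclic shift `σ`, `(σ x) r = x (r + 1)`, as a permutation. -/
def sigmaEquiv {n : ℕ} [NeZero n] : Equiv.Perm (Fin n → ZMod 12) where
  toFun x := fun r => x (r + 1)
  invFun x := fun r => x (r - 1)
  left_inv x := by funext r; simp
  right_inv x := by funext r; simp

lemma z_apply {n : ℕ} [NeZero n] (x : Fin n → ZMod 12) (r : Fin n) :
    ((sigmaEquiv * pEquiv 0 1 : Equiv.Perm (Fin n → ZMod 12))) x r = x 0 + x 1 - x (r + 1) := by
  rfl

open Fin.NatCast Fin.CommRing in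
lemma z_pow_two_mul {n : ℕ} [NeZero n] (k : ℕ) (x : Fin n → ZMod 12) (r : Fin n) :
    (((sigmaEquiv * pEquiv 0 1 : Equiv.Perm (Fin n → ZMod 12))) ^ (2 * k)) x r
      = x (r + (2 * k : ℕ)) + x 0 - x ((2 * k : ℕ) : Fin n) := by
  induction k generalizing x with
  | zero => simp
  | succ k ih =>
    have h2 : 2 * (k + 1) = 2 * k + 1 + 1 := by ring
    rw [h2, pow_succ, pow_succ, Equiv.Perm.mul_apply, Equiv.Perm.mul_apply, ih]
    simp only [z_apply]
    have hc : ((2 * k + 1 + 1 : ℕ) : Fin n) = ((2 * k : ℕ) : Fin n) + 1 + 1 := by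
      push_cast; ring
    rw [hc]
    simp only [zero_add]
    rw [show r + (((2 * k : ℕ) : Fin n) + 1 + 1) = r + ((2 * k : ℕ) : Fin n) + 1 + 1 from by ring]
    ring

open Fin.NatCast Fin.CommRing in
theorem stmt16 (n : ℕ) [NeZero n] (hn : 2 ≤ n) (heven : Even n) :
    (sigmaEquiv (n := n) * pEquiv 0 1) ^ n = 1 := by
  obtain ⟨m, hm⟩ := heven
  have hn2 : n = 2 * m := by omega
  subst hn2
  ext x r
  rw [Equiv.Perm.one_apply, z_pow_two_mul, Fin.natCast_self]
  ring_nf
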